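/- Suppose the noise values {L_h}_{h∈H} are independent real-valued random variables with E[L_h] = 0 and Var(L_h) = 8/ε_{ℓ(h)}², where ℓ(h) is the level of h and ε_1, …, ε_d > 0. Then for every district D ⊆ H_d with associated weights {w_h}, the district error satisfies E[E_D] = 0 and Var(E_D) = 8 w_root² / ε_1² + Σ_{ℓ=2}^{d} (8/ε_ℓ²) · Σ_{h ∈ H_ℓ} (w_h − w_{ĥ})². -/

import Mathlib

open Finset MeasureTheory ProbabilityTheory

structure Hierarchy where
  Node : Type
  fintypeNode : Fintype Node
  decEqNode : DecidableEq Node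
  d : ℕ
  d_pos : 1 ≤ d
  root : Node
  level : Node → ℕ
  parent : Node → Node
  level_pos : ∀ h, 1 ≤ level h
  level_le : ∀ h, level h ≤ d
  level_root : level root = 1
  root_unique : ∀ h, level h = 1 → h = root
  parent_level : ∀ h, h ≠ root → level (parent h) + 1 = level h
  child_exists : ∀ h, level h < d → ∃ c, c ≠ root ∧ parent c = h

attribute [instance] Hierarchy.fintypeNode Hierarchy.decEqNode

namespace Hierarchy

variable (H : Hierarchy)

def children (h : H.Node) : Finset H.Node :=
  Finset.univ.filter fun c => c ≠ H.root ∧ H.parent c = h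

def levelSet (ℓ : ℕ) : Finset H.Node :=
  Finset.univ.filter fun h => H.level h = ℓ

def leaves : Finset H.Node := H.levelSet H.d

def Consistent (a : H.Node → ℝ) : Prop :=
  ∀ h, H.level h < H.d → a h = ∑ c ∈ H.children h, a c

def IsToyDown (a L α : H.Node → ℝ) : Prop :=
  α H.root = a H.root + L H.root ∧
  ∀ h, H.level h < H.d →
    (∑ c ∈ H.children h, α c) = α h ∧
    ∀ x : H.Node → ℝ, (∑ c ∈ H.children h, x c) = α h →
      (∃ c ∈ H.children h, x c ≠ α c) →
      ∑ c ∈ H.children h, (α c - (a c + L c))^2 <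
        ∑ c ∈ H.children h, (x c - (a c + L c))^2

def IsWeights (D : Finset H.Node) (w : H.Node → ℝ) : Prop :=
  (∀ h, H.level h = H.d → w h = if h ∈ D then 1 else 0) ∧
  (∀ h, H.level h < H.d → w h = (∑ c ∈ H.children h, w c) / ((H.children h).card : ℝ))

def frag (w : H.Node → ℝ) : ℝ :=
  ∑ h ∈ Finset.univ.filter (fun h => h ≠ H.root), (w h - w (H.parent h))^2

lemma mem_children {c h : H.Node} : c ∈ H.children h ↔ c ≠ H.root ∧ H.parent c = h := by
  simp [children]

lemma children_nonempty {h : H.Node} (hlt : H.level h < H.d) : (H.children h).Nonempty := by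
  obtain ⟨c, hc1, hc2⟩ := H.child_exists h hlt
  exact ⟨c, H.mem_children.2 ⟨hc1, hc2⟩⟩

lemma level_of_mem_children {c h : H.Node} (hc : c ∈ H.children h) :
    H.level c = H.level h + 1 := by
  obtain ⟨h1, h2⟩ := H.mem_children.1 hc
  rw [← h2]; exact (H.parent_level c h1).symm

lemma card_children_ne_zero {h : H.Node} (hlt : H.level h < H.d) :
    ((H.children h).card : ℝ) ≠ 0 := by
  have := Finset.card_pos.2 (H.children_nonempty hlt); positivity

/-- explicit formula for the ToyDown children. -/
lemma toydown_formula {a L α : H.Node → ℝ} (htd : H.IsToyDown a L α)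
    {h : H.Node} (hlt : H.level h < H.d) {c : H.Node} (hc : c ∈ H.children h) :
    α c = (a c + L c) +
      (α h - ∑ c' ∈ H.children h, (a c' + L c')) / ((H.children h).card : ℝ) := by
  set n : ℝ := ((H.children h).card : ℝ) with hn
  have hn0 : n ≠ 0 := H.card_children_ne_zero hlt
  set t : ℝ := (α h - ∑ c' ∈ H.children h, (a c' + L c')) / n with ht
  set x : H.Node → ℝ := fun g => (a g + L g) + t with hx
  have hsum : (∑ c' ∈ H.children h, x c') = α h := by
    simp only [hx, Finset.sum_add_distrib, Finset.sum_const, nsmul_eq_mul, ht]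
    field_simp
    rw [← hn]; ring
  by_contra hne
  have hstrict := (htd.2 h hlt).2 x hsum ⟨c, hc, fun e => hne e.symm⟩
  have hxs : ∑ c' ∈ H.children h, (x c' - (a c' + L c'))^2 = n * t^2 := by
    simp [hx, Finset.sum_const, nsmul_eq_mul]
    exact Or.inl hn.symm
  have hzero : ∑ c' ∈ H.children h, (α c' - x c') = 0 := by
    rw [Finset.sum_sub_distrib, (htd.2 h hlt).1, hsum, sub_self]
  have hαs : ∑ c' ∈ H.children h, (α c' - (a c' + L c'))^2 =
      (∑ c' ∈ H.children h, (α c' - x c')^2) + n * t^2 := by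
    have hterm : ∀ c' ∈ H.children h, (α c' - (a c' + L c'))^2 =
        (α c' - x c')^2 + 2*t*(α c' - x c') + t^2 := by
      intro c' _; simp only [hx]; ring
    rw [Finset.sum_congr rfl hterm, Finset.sum_add_distrib, Finset.sum_add_distrib,
      ← Finset.mul_sum, hzero, mul_zero, add_zero, Finset.sum_const, nsmul_eq_mul]
  have hnonneg : (0:ℝ) ≤ ∑ c' ∈ H.children h, (α c' - x c')^2 :=
    Finset.sum_nonneg fun _ _ => sq_nonneg _
  rw [hαs, hxs] at hstrict
  linarith

lemma toydown_error {a L α : H.Node → ℝ} (hcons : H.Consistent a)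
    (htd : H.IsToyDown a L α)
    {h : H.Node} (hlt : H.level h < H.d) {c : H.Node} (hc : c ∈ H.children h) :
    α c - a c = L c +
      ((α h - a h) - ∑ c' ∈ H.children h, L c') / ((H.children h).card : ℝ) := by
  have := H.toydown_formula htd hlt hc
  rw [Finset.sum_add_distrib, ← hcons h hlt] at this
  rw [this]; ring_nf

lemma weight_step {a L α : H.Node → ℝ} {w : H.Node → ℝ} {D : Finset H.Node}
    (hcons : H.Consistent a) (htd : H.IsToyDown a L α) (hw : H.IsWeights D w)
    {h : H.Node} (hlt : H.level h < H.d) :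
    ∑ c ∈ H.children h, w c * (α c - a c) =
      w h * (α h - a h) + ∑ c ∈ H.children h, (w c - w h) * L c := by
  set n : ℝ := ((H.children h).card : ℝ) with hn
  have hn0 : n ≠ 0 := H.card_children_ne_zero hlt
  have hsw : ∑ c ∈ H.children h, w c = n * w h := by
    rw [hw.2 h hlt]; field_simp
    rw [← hn, mul_div_assoc, div_self hn0, mul_one]
  have hterm : ∀ c ∈ H.children h, w c * (α c - a c) =
      w c * L c + w c * (((α h - a h) - ∑ c' ∈ H.children h, L c') / n) := by
    intro c hc; rw [H.toydown_error hcons htd hlt hc]; ring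
  rw [Finset.sum_congr rfl hterm, Finset.sum_add_distrib, ← Finset.sum_mul, hsw]
  have hrhs : ∑ c ∈ H.children h, (w c - w h) * L c =
      (∑ c ∈ H.children h, w c * L c) - w h * ∑ c ∈ H.children h, L c := by
    rw [Finset.mul_sum, ← Finset.sum_sub_distrib]
    exact Finset.sum_congr rfl fun c _ => by ring
  rw [hrhs]
  field_simp
  ring


lemma levelSet_one : H.levelSet 1 = {H.root} := by
  ext h
  simp only [levelSet, Finset.mem_filter, Finset.mem_univ, true_and, Finset.mem_singleton]
  exact ⟨H.root_unique h, fun e => e ▸ H.level_root⟩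

lemma children_eq_fiber {g : H.Node} {ℓ : ℕ} (h1 : 1 ≤ ℓ) (hg : H.level g = ℓ) :
    (H.levelSet (ℓ+1)).filter (fun c => H.parent c = g) = H.children g := by
  ext c
  simp only [levelSet, children, Finset.mem_filter, Finset.mem_univ, true_and]
  constructor
  · rintro ⟨hc, hp⟩
    refine ⟨fun hr => ?_, hp⟩
    rw [hr, H.level_root] at hc; omega
  · rintro ⟨hc1, hc2⟩
    have := H.parent_level c hc1
    rw [hc2, hg] at this
    exact ⟨this.symm, hc2⟩

lemma district_identity {a L α : H.Node → ℝ} {w : H.Node → ℝ} {D : Finset H.Node}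
    (hcons : H.Consistent a) (htd : H.IsToyDown a L α) (hw : H.IsWeights D w)
    (ℓ : ℕ) (h1 : 1 ≤ ℓ) (h2 : ℓ ≤ H.d) :
    ∑ h ∈ H.levelSet ℓ, w h * (α h - a h) =
      w H.root * L H.root +
      ∑ h ∈ Finset.univ.filter (fun g => g ≠ H.root ∧ H.level g ≤ ℓ),
        (w h - w (H.parent h)) * L h := by
  induction ℓ, h1 using Nat.le_induction with
  | base =>
    rw [H.levelSet_one]
    have hempty : Finset.univ.filter (fun g : H.Node => g ≠ H.root ∧ H.level g ≤ 1) = ∅ := by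
      rw [Finset.filter_eq_empty_iff]
      rintro g _ ⟨hr, hl⟩
      have := H.level_pos g
      exact hr (H.root_unique g (by omega))
    rw [hempty, Finset.sum_singleton, Finset.sum_empty, htd.1]
    ring
  | succ n hn ih =>
    have hnd : n < H.d := h2
    have ihv := ih (le_of_lt hnd)
    have hfiber : ∀ g ∈ H.levelSet n,
        (H.levelSet (n+1)).filter (fun c => H.parent c = g) = H.children g := by
      intro g hg
      have hgl : H.level g = n := by simpa [levelSet] using hg
      exact H.children_eq_fiber hn hgl
    have hmaps : ∀ c ∈ H.levelSet (n+1), H.parent c ∈ H.levelSet n := by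
      intro c hc
      have hcl : H.level c = n + 1 := by simpa [levelSet] using hc
      have hcr : c ≠ H.root := by
        intro e; rw [e, H.level_root] at hcl; omega
      have hp := H.parent_level c hcr
      simp only [levelSet, Finset.mem_filter, Finset.mem_univ, true_and]
      omega
    have key1 : ∑ h ∈ H.levelSet (n+1), w h * (α h - a h)
        = ∑ g ∈ H.levelSet n, ∑ c ∈ H.children g, w c * (α c - a c) := by
      rw [← Finset.sum_fiberwise_of_maps_to hmaps (fun h => w h * (α h - a h))]
      exact Finset.sum_congr rfl fun g hg => by rw [hfiber g hg]
    have key2 : ∑ h ∈ H.levelSet (n+1), (w h - w (H.parent h)) * L h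
        = ∑ g ∈ H.levelSet n, ∑ c ∈ H.children g, (w c - w g) * L c := by
      rw [← Finset.sum_fiberwise_of_maps_to hmaps (fun h => (w h - w (H.parent h)) * L h)]
      refine Finset.sum_congr rfl fun g hg => ?_
      rw [hfiber g hg]
      refine Finset.sum_congr rfl fun c hc => ?_
      rw [(H.mem_children.1 hc).2]
    have hstep : ∀ g ∈ H.levelSet n, ∑ c ∈ H.children g, w c * (α c - a c)
        = w g * (α g - a g) + ∑ c ∈ H.children g, (w c - w g) * L c := by
      intro g hg
      have hgl : H.level g = n := by simpa [levelSet] using hg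
      exact H.weight_step hcons htd hw (by omega)
    have hunion : Finset.univ.filter (fun g : H.Node => g ≠ H.root ∧ H.level g ≤ n+1)
        = Finset.univ.filter (fun g : H.Node => g ≠ H.root ∧ H.level g ≤ n) ∪ H.levelSet (n+1) := by
      ext g
      simp only [Finset.mem_filter, Finset.mem_union, Finset.mem_univ, true_and, levelSet]
      constructor
      · rintro ⟨hr, hl⟩
        rcases Nat.lt_or_ge (H.level g) (n+1) with hcase | hcase
        · exact Or.inl ⟨hr, by omega⟩
        · exact Or.inr (by omega)
      · rintro (⟨hr, hl⟩ | hl)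
        · exact ⟨hr, by omega⟩
        · refine ⟨fun e => ?_, by omega⟩
          rw [e, H.level_root] at hl; omega
    have hdisj : Disjoint
        (Finset.univ.filter (fun g : H.Node => g ≠ H.root ∧ H.level g ≤ n))
        (H.levelSet (n+1)) := by
      rw [Finset.disjoint_left]
      intro g hg1 hg2
      simp only [Finset.mem_filter, Finset.mem_univ, true_and, levelSet] at hg1 hg2
      omega
    rw [key1, Finset.sum_congr rfl hstep, Finset.sum_add_distrib, ihv, ← key2,
      hunion, Finset.sum_union hdisj]
    ring


lemma district_error_eq {a L α : H.Node → ℝ} {w : H.Node → ℝ} {D : Finset H.Node}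
    (hcons : H.Consistent a) (htd : H.IsToyDown a L α) (hD : D ⊆ H.leaves)
    (hw : H.IsWeights D w) :
    ∑ h ∈ D, (α h - a h) = ∑ h ∈ Finset.univ,
      (if h = H.root then w H.root else w h - w (H.parent h)) * L h := by
  have hid := H.district_identity hcons htd hw H.d H.d_pos le_rfl
  have hleft : ∑ h ∈ H.levelSet H.d, w h * (α h - a h) = ∑ h ∈ D, (α h - a h) := by
    have hterm : ∀ h ∈ H.levelSet H.d, w h * (α h - a h) =
        if h ∈ D then (α h - a h) else 0 := by
      intro h hh
      have hl : H.level h = H.d := by simpa [levelSet] using hh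
      rw [hw.1 h hl]
      split <;> simp
    have hD' : D ⊆ H.levelSet H.d := hD
    rw [Finset.sum_congr rfl hterm, Finset.sum_ite_mem,
      Finset.inter_eq_right.2 hD']
  have hfilter : Finset.univ.filter (fun g : H.Node => g ≠ H.root ∧ H.level g ≤ H.d)
      = Finset.univ.erase H.root := by
    ext g
    simp only [Finset.mem_filter, Finset.mem_univ, true_and, Finset.mem_erase, and_true]
    exact ⟨fun ⟨h1, _⟩ => h1, fun h1 => ⟨h1, H.level_le g⟩⟩
  rw [hleft, hfilter] at hid
  rw [hid, ← Finset.add_sum_erase _ _ (Finset.mem_univ H.root), if_pos rfl]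
  congr 1
  refine Finset.sum_congr rfl fun g hg => ?_
  rw [if_neg (Finset.mem_erase.1 hg).1]

end Hierarchy


/-- Expectation and variance of the ToyDown district error when the noise variables are
independent, mean zero, with `Var(L_h) = 8/ε_{ℓ(h)}²`. -/
theorem toydown_district_error_variance (H : Hierarchy)
    {Ω : Type} [MeasurableSpace Ω] (μ : MeasureTheory.Measure Ω)
    [MeasureTheory.IsProbabilityMeasure μ]
    (ε : ℕ → ℝ) (hε : ∀ ℓ, 1 ≤ ℓ → ℓ ≤ H.d → 0 < ε ℓ)
    (a : H.Node → ℝ) (hcons : H.Consistent a)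
    (L : H.Node → Ω → ℝ)
    (hmeas : ∀ h, Measurable (L h))
    (hL2 : ∀ h, MeasureTheory.MemLp (L h) 2 μ)
    (hindep : iIndepFun L μ)
    (hmean : ∀ h, ∫ ω, L h ω ∂μ = 0)
    (hvar : ∀ h, variance (L h) μ = 8 / (ε (H.level h)) ^ 2)
    (α : H.Node → Ω → ℝ)
    (hα : ∀ ω, H.IsToyDown a (fun h => L h ω) (fun h => α h ω))
    (D : Finset H.Node) (hD : D ⊆ H.leaves)
    (w : H.Node → ℝ) (hw : H.IsWeights D w) :
    (∫ ω, (∑ h ∈ D, (α h ω - a h)) ∂μ) = 0 ∧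
      variance (fun ω => ∑ h ∈ D, (α h ω - a h)) μ =
        8 * (w H.root) ^ 2 / (ε 1) ^ 2 +
          ∑ ℓ ∈ Finset.Icc 2 H.d, (8 / (ε ℓ) ^ 2) *
            ∑ h ∈ H.levelSet ℓ, (w h - w (H.parent h)) ^ 2 := by
  set c : H.Node → ℝ :=
    fun g => if g = H.root then w H.root else w g - w (H.parent g) with hc
  have key : ∀ ω, (∑ h ∈ D, (α h ω - a h)) = ∑ h ∈ Finset.univ, c h * L h ω :=
    fun ω => H.district_error_eq hcons (hα ω) hD hw
  have hfeq : (fun ω => ∑ h ∈ D, (α h ω - a h))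
      = (fun ω => ∑ h ∈ Finset.univ, c h * L h ω) := funext key
  constructor
  · rw [hfeq, MeasureTheory.integral_finset_sum _
      (fun h _ => ((hL2 h).integrable one_le_two).const_mul _)]
    simp [MeasureTheory.integral_const_mul, hmean]
  · rw [hfeq]
    have hsum_fn : (fun ω => ∑ h ∈ Finset.univ, c h * L h ω)
        = ∑ h ∈ Finset.univ, (fun ω => c h * L h ω) := by
      funext ω; simp
    rw [hsum_fn,
      ProbabilityTheory.IndepFun.variance_sum
        (fun i _ => (hL2 i).const_mul (c i))
        (fun i _ j _ hij =>
          (hindep.indepFun hij).comp (measurable_const_mul (c i))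
            (measurable_const_mul (c j)))]
    have hvc : ∀ h : H.Node, variance (fun ω => c h * L h ω) μ
        = c h ^ 2 * (8 / ε (H.level h) ^ 2) := by
      intro h; rw [ProbabilityTheory.variance_const_mul, hvar]
    rw [Finset.sum_congr rfl fun h _ => hvc h,
      ← Finset.add_sum_erase _ _ (Finset.mem_univ H.root)]
    congr 1
    · simp only [hc, if_true, H.level_root]
      ring
    · have hmaps : ∀ g ∈ Finset.univ.erase H.root, H.level g ∈ Finset.Icc 2 H.d := by
        intro g hg
        have hgr : g ≠ H.root := (Finset.mem_erase.1 hg).1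
        have h1 := H.level_pos g
        have h2 := H.level_le g
        have h3 : H.level g ≠ 1 := fun e => hgr (H.root_unique g e)
        simp only [Finset.mem_Icc]; omega
      rw [← Finset.sum_fiberwise_of_maps_to hmaps
        (fun h => c h ^ 2 * (8 / ε (H.level h) ^ 2))]
      refine Finset.sum_congr rfl fun ℓ hℓ => ?_
      have hℓ2 : 2 ≤ ℓ := (Finset.mem_Icc.1 hℓ).1
      have hfib : (Finset.univ.erase H.root).filter (fun g => H.level g = ℓ)
          = H.levelSet ℓ := by
        ext g
        simp only [Finset.mem_filter, Finset.mem_erase, Finset.mem_univ, true_and,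
          and_true, Hierarchy.levelSet]
        constructor
        · rintro ⟨_, h⟩; exact h
        · intro h
          refine ⟨fun e => ?_, h⟩
          rw [e, H.level_root] at h; omega
      rw [hfib, Finset.mul_sum]
      refine Finset.sum_congr rfl fun g hg => ?_
      have hgl : H.level g = ℓ := by simpa [Hierarchy.levelSet] using hg
      have hgr : g ≠ H.root := by
        intro e; rw [e, H.level_root] at hgl; omega
      rw [hc]; simp only [if_neg hgr, hgl]; ring
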